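/- Geometric-mean bound on consecutive derivative values: let N≥2 and η ∈ ℝ^N_<, set P(x)=∏_{k=1}^N(x−η_k), and let ζ_k be the unique critical point of P in the interval (η_k, η_{k+1}). Then for every k∈{1,…,N−1}: √( |P′(η_k)·P′(η_{k+1})| ) ≤ 4·|P(ζ_k)| / (η_{k+1}−η_k). -/

import Mathlib

noncomputable def Pprod {N : ℕ} (eta : Fin N → ℝ) (x : ℝ) : ℝ := ∏ k, (x - eta k)

def inclL {N : ℕ} (j : Fin (N - 1)) : Fin N := ⟨j.1, lt_of_lt_of_le j.2 (Nat.sub_le N 1)⟩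
def inclR {N : ℕ} (j : Fin (N - 1)) : Fin N := ⟨j.1 + 1, by have := j.2; omega⟩

lemma Pprod_hasDerivAt {N : ℕ} (eta : Fin N → ℝ) (x : ℝ) :
    HasDerivAt (Pprod eta) (∑ i, ∏ j ∈ Finset.univ.erase i, (x - eta j)) x := by
  have h := HasDerivAt.fun_finsetProd (u := Finset.univ) (f := fun (i : Fin N) (x : ℝ) => x - eta i)
    (f' := fun _ => (1:ℝ)) (x := x) (fun i _ => (hasDerivAt_id x).sub_const (eta i))
  simp [smul_eq_mul] at h
  exact h

lemma fac_bound (y d : ℝ) (hy : y ≠ 0) (hsgn : 0 ≤ y * (y + d)) :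
    |y + d| ≤ |y| * Real.exp (d / y) := by
  have h1 : y + d = y * (1 + d / y) := by field_simp
  have h2 : 0 ≤ 1 + d / y := by
    have : 1 + d / y = y * (y + d) / y ^ 2 := by field_simp
    rw [this]; positivity
  rw [h1, abs_mul, abs_of_nonneg h2]
  have := Real.add_one_le_exp (d / y)
  exact mul_le_mul_of_nonneg_left (by linarith) (abs_nonneg y)

lemma num_bound (al be : ℝ) (ha : 0 < al) (hb : 0 < be) :
    (al + be) ^ 4 * Real.exp ((be - al) * (be⁻¹ - al⁻¹)) ≤ 16 * al ^ 2 * be ^ 2 := by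
  have hx : (be - al) * (be⁻¹ - al⁻¹) = -((al - be) ^ 2 / (al * be)) := by
    field_simp; ring
  set x := (al - be) ^ 2 / (al * be) with hxdef
  have hx0 : 0 ≤ x := by positivity
  have he : 1 + x / 2 ≤ Real.exp (x / 2) := by
    have := Real.add_one_le_exp (x / 2); linarith
  have hexp : (1 + x / 2) ^ 2 ≤ Real.exp x := by
    calc (1 + x / 2) ^ 2 ≤ (Real.exp (x / 2)) ^ 2 := by
          apply pow_le_pow_left₀ (by linarith) he
      _ = Real.exp x := by rw [sq, ← Real.exp_add]; ring_nf
  have hxp : x * (al * be) = (al - be) ^ 2 := by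
    rw [hxdef]; field_simp
  have h4 : (al + be) ^ 4 ≤ 16 * al ^ 2 * be ^ 2 * Real.exp x := by
    nlinarith [mul_pos ha hb, sq_nonneg (al * be), sq_nonneg x, Real.exp_pos x,
      mul_le_mul_of_nonneg_left hexp (by positivity : (0:ℝ) ≤ 16 * al ^ 2 * be ^ 2)]
  rw [hx, Real.exp_neg]
  calc (al + be) ^ 4 * (Real.exp x)⁻¹
      ≤ (16 * al ^ 2 * be ^ 2 * Real.exp x) * (Real.exp x)⁻¹ := by
        exact mul_le_mul_of_nonneg_right h4 (by positivity)
    _ = 16 * al ^ 2 * be ^ 2 := by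
        field_simp


/-- **Geometric-mean bound on consecutive derivative values**:
`√(|P′(η_k) P′(η_{k+1})|) ≤ 4 |P(ζ_k)| / (η_{k+1} − η_k)`, where `ζ_k` is the unique
critical point of `P` in `(η_k, η_{k+1})`. -/
theorem geometric_mean_derivative_bound (N : ℕ) (hN : 2 ≤ N) (eta : Fin N → ℝ)
    (heta : StrictMono eta) (k : Fin (N - 1)) (zeta : ℝ)
    (hmem : zeta ∈ Set.Ioo (eta (inclL k)) (eta (inclR k)))
    (hcrit : deriv (Pprod eta) zeta = 0) :
    Real.sqrt |deriv (Pprod eta) (eta (inclL k)) * deriv (Pprod eta) (eta (inclR k))| ≤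
      4 * |Pprod eta zeta| / (eta (inclR k) - eta (inclL k)) := by
  obtain ⟨hza, hzb⟩ := hmem
  set kL := inclL k with hkL
  set kR := inclR k with hkR
  set a := eta kL with ha
  set b := eta kR with hb
  have hkLR : kL ≠ kR := by
    simp only [hkL, hkR, inclL, inclR, Fin.mk.injEq, ne_eq]; omega
  have hkLlt : kL < kR := by
    simp only [hkL, hkR, inclL, inclR, Fin.lt_def]; omega
  have hab : a < b := heta hkLlt
  set al := zeta - a with hal
  set be := b - zeta with hbe
  have hal0 : 0 < al := by rw [hal]; linarith
  have hbe0 : 0 < be := by rw [hbe]; linarith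
  have hd0 : 0 < b - a := by linarith
  have hside : ∀ i : Fin N, i ≠ kL → i ≠ kR → eta i < a ∨ b < eta i := by
    intro i hiL hiR
    rcases lt_or_ge (i : ℕ) (kL : ℕ) with h | h
    · left; exact heta (by rwa [Fin.lt_def])
    · right
      have hlt : (kR : ℕ) < (i : ℕ) := by
        have h1 : (i : ℕ) ≠ (kL : ℕ) := fun hh => hiL (Fin.ext hh)
        have h2 : (i : ℕ) ≠ (kR : ℕ) := fun hh => hiR (Fin.ext hh)
        have h3 : (kR : ℕ) = (kL : ℕ) + 1 := by simp [hkL, hkR, inclL, inclR]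
        omega
      exact heta (by rwa [Fin.lt_def])
  have hne : ∀ i : Fin N, zeta - eta i ≠ 0 := by
    intro i
    by_cases hiL : i = kL
    · rw [hiL]; exact sub_ne_zero.mpr (ne_of_gt hza)
    by_cases hiR : i = kR
    · rw [hiR]; exact sub_ne_zero.mpr (ne_of_lt hzb)
    rcases hside i hiL hiR with h | h
    · exact sub_ne_zero.mpr (ne_of_gt (lt_trans h hza))
    · exact sub_ne_zero.mpr (ne_of_lt (lt_trans hzb h))
  set s : Finset (Fin N) := (Finset.univ.erase kL).erase kR with hs
  have hmemS : ∀ j ∈ s, j ≠ kL ∧ j ≠ kR := by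
    intro j hj
    simp only [hs, Finset.mem_erase, Finset.mem_univ, and_true] at hj
    exact ⟨hj.2, hj.1⟩
  have hkRmem : kR ∈ Finset.univ.erase kL := by
    simp [Finset.mem_erase, hkLR.symm]
  have hkLmem : kL ∈ Finset.univ.erase kR := by
    simp [Finset.mem_erase, hkLR]
  -- derivative at a
  have hderA : deriv (Pprod eta) a = (a - b) * ∏ j ∈ s, (a - eta j) := by
    rw [(Pprod_hasDerivAt eta a).deriv]
    rw [Finset.sum_eq_single kL
      (fun i _ hi => Finset.prod_eq_zero
        (Finset.mem_erase.mpr ⟨Ne.symm hi, Finset.mem_univ kL⟩) (by simp [ha]))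
      (by simp)]
    rw [← Finset.mul_prod_erase _ _ hkRmem, hs, hb]
  have hderB : deriv (Pprod eta) b = (b - a) * ∏ j ∈ s, (b - eta j) := by
    rw [(Pprod_hasDerivAt eta b).deriv]
    rw [Finset.sum_eq_single kR
      (fun i _ hi => Finset.prod_eq_zero
        (Finset.mem_erase.mpr ⟨Ne.symm hi, Finset.mem_univ kR⟩) (by simp [hb]))
      (by simp)]
    rw [← Finset.mul_prod_erase _ _ hkLmem, hs, Finset.erase_right_comm, ha]
  have hPz : Pprod eta zeta = (zeta - a) * ((zeta - b) * ∏ j ∈ s, (zeta - eta j)) := by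
    rw [Pprod, ← Finset.mul_prod_erase _ _ (Finset.mem_univ kL),
      ← Finset.mul_prod_erase _ _ hkRmem, hs, ha, hb]
  have hPzne : Pprod eta zeta ≠ 0 := by
    rw [Pprod]
    exact Finset.prod_ne_zero_iff.mpr (fun i _ => hne i)
  have hT : ∑ i : Fin N, (zeta - eta i)⁻¹ = 0 := by
    have h1 : deriv (Pprod eta) zeta = ∑ i, ∏ j ∈ Finset.univ.erase i, (zeta - eta j) :=
      (Pprod_hasDerivAt eta zeta).deriv
    have h2 : ∀ i : Fin N, ∏ j ∈ Finset.univ.erase i, (zeta - eta j)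
        = (zeta - eta i)⁻¹ * Pprod eta zeta := by
      intro i
      rw [eq_inv_mul_iff_mul_eq₀ (hne i), Pprod]
      exact Finset.mul_prod_erase Finset.univ (fun j => zeta - eta j) (Finset.mem_univ i)
    have h3 : (∑ i : Fin N, (zeta - eta i)⁻¹) * Pprod eta zeta = 0 := by
      calc (∑ i : Fin N, (zeta - eta i)⁻¹) * Pprod eta zeta
          = ∑ i : Fin N, (zeta - eta i)⁻¹ * Pprod eta zeta := Finset.sum_mul _ _ _
        _ = ∑ i : Fin N, ∏ j ∈ Finset.univ.erase i, (zeta - eta j) :=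
            Finset.sum_congr rfl (fun i _ => (h2 i).symm)
        _ = 0 := by rw [← h1, hcrit]
    exact (mul_eq_zero.mp h3).resolve_right hPzne
  set S := ∑ j ∈ s, (zeta - eta j)⁻¹ with hSdef
  have hS : S = -(zeta - a)⁻¹ - (zeta - b)⁻¹ := by
    have h1 : (zeta - eta kL)⁻¹ + ((zeta - eta kR)⁻¹ + S) = 0 := by
      rw [hSdef, hs, Finset.add_sum_erase _ (fun i => (zeta - eta i)⁻¹) hkRmem,
        Finset.add_sum_erase _ (fun i => (zeta - eta i)⁻¹) (Finset.mem_univ kL)]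
      exact hT
    rw [ha, hb]
    linarith
  set M := ∏ j ∈ s, |zeta - eta j| with hM
  have hM0 : 0 ≤ M := Finset.prod_nonneg (fun j _ => abs_nonneg _)
  have hprodbd : ∀ x : ℝ, (∀ j ∈ s, 0 ≤ (zeta - eta j) * (x - eta j)) →
      ∏ j ∈ s, |x - eta j| ≤ M * Real.exp ((x - zeta) * S) := by
    intro x hsgn
    have step : ∏ j ∈ s, |x - eta j| ≤
        ∏ j ∈ s, (|zeta - eta j| * Real.exp ((x - zeta) * (zeta - eta j)⁻¹)) := by
      apply Finset.prod_le_prod (fun j _ => abs_nonneg _)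
      intro j hj
      have hfb := fac_bound (zeta - eta j) (x - zeta) (hne j) (by
        have hxx : zeta - eta j + (x - zeta) = x - eta j := by ring
        rw [hxx]; exact hsgn j hj)
      have hxx : zeta - eta j + (x - zeta) = x - eta j := by ring
      rw [hxx, div_eq_mul_inv] at hfb
      exact hfb
    calc ∏ j ∈ s, |x - eta j| ≤ _ := step
      _ = M * Real.exp ((x - zeta) * S) := by
        rw [Finset.prod_mul_distrib, ← Real.exp_sum, ← Finset.mul_sum, ← hSdef, ← hM]
  have hsgnA : ∀ j ∈ s, 0 ≤ (zeta - eta j) * (a - eta j) := by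
    intro j hj
    obtain ⟨hjL, hjR⟩ := hmemS j hj
    rcases hside j hjL hjR with h | h
    · nlinarith
    · nlinarith
  have hsgnB : ∀ j ∈ s, 0 ≤ (zeta - eta j) * (b - eta j) := by
    intro j hj
    obtain ⟨hjL, hjR⟩ := hmemS j hj
    rcases hside j hjL hjR with h | h
    · nlinarith
    · nlinarith
  have hQa := hprodbd a hsgnA
  have hQb := hprodbd b hsgnB
  have hPzabs : |Pprod eta zeta| = al * be * M := by
    rw [hPz, abs_mul, abs_mul, Finset.abs_prod,
      abs_of_pos (show (0:ℝ) < zeta - a by linarith),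
      abs_of_neg (show zeta - b < 0 by linarith), ← hM, hal, hbe]
    ring
  have hRHS0 : 0 ≤ 4 * |Pprod eta zeta| / (b - a) := by positivity
  have e1 : -(a - b) = al + be := by rw [hal, hbe]; ring
  have e2 : b - a = al + be := by rw [hal, hbe]; ring
  have key : |deriv (Pprod eta) a * deriv (Pprod eta) b| ≤
      (4 * |Pprod eta zeta| / (b - a)) ^ 2 := by
    rw [hderA, hderB, abs_mul, abs_mul, abs_mul, Finset.abs_prod, Finset.abs_prod,
      abs_of_neg (show a - b < 0 by linarith), abs_of_pos hd0, hPzabs, e1, e2]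
    have hAB : (∏ j ∈ s, |a - eta j|) * ∏ j ∈ s, |b - eta j| ≤
        M ^ 2 * Real.exp ((a - zeta) * S + (b - zeta) * S) := by
      calc (∏ j ∈ s, |a - eta j|) * ∏ j ∈ s, |b - eta j|
          ≤ (M * Real.exp ((a - zeta) * S)) * (M * Real.exp ((b - zeta) * S)) := by
            apply mul_le_mul hQa hQb (Finset.prod_nonneg (fun j _ => abs_nonneg _)) (by positivity)
        _ = M ^ 2 * Real.exp ((a - zeta) * S + (b - zeta) * S) := by
            rw [Real.exp_add]; ring
    have hE : (a - zeta) * S + (b - zeta) * S = (be - al) * (be⁻¹ - al⁻¹) := by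
      rw [hS]
      have h2' : zeta - b = -be := by rw [hbe]; ring
      have ha' : a - zeta = -al := by rw [hal]; ring
      have hb' : b - zeta = be := by rw [hbe]
      have h1' : zeta - a = al := by rw [hal]
      rw [h1', h2', ha', hb']
      rw [inv_neg]; ring
    rw [hE] at hAB
    have hnum := num_bound al be hal0 hbe0
    calc (al + be) * (∏ j ∈ s, |a - eta j|) * ((al + be) * ∏ j ∈ s, |b - eta j|)
        = (al + be) ^ 2 * ((∏ j ∈ s, |a - eta j|) * ∏ j ∈ s, |b - eta j|) := by ring
      _ ≤ (al + be) ^ 2 * (M ^ 2 * Real.exp ((be - al) * (be⁻¹ - al⁻¹))) :=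
          mul_le_mul_of_nonneg_left hAB (by positivity)
      _ = ((al + be) ^ 4 * Real.exp ((be - al) * (be⁻¹ - al⁻¹))) * M ^ 2 / (al + be) ^ 2 := by
          field_simp
      _ ≤ (16 * al ^ 2 * be ^ 2) * M ^ 2 / (al + be) ^ 2 :=
          (div_le_div_iff_of_pos_right (by positivity)).mpr
            (mul_le_mul_of_nonneg_right hnum (sq_nonneg M))
      _ = (4 * (al * be * M) / (al + be)) ^ 2 := by
          field_simp; ring
  calc Real.sqrt |deriv (Pprod eta) a * deriv (Pprod eta) b|
      ≤ Real.sqrt ((4 * |Pprod eta zeta| / (b - a)) ^ 2) := Real.sqrt_le_sqrt key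
    _ = 4 * |Pprod eta zeta| / (b - a) := Real.sqrt_sq hRHS0
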